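/- (Hypothesis Correctness.) The probability that the Label procedure returns a correct hypothesis set increases monotonically with the number of unlabelled examples: fix a finite nonempty type α of atoms, an initial state (T₀, P₀) with T₀ covering P₀ and P₀ nonempty, a probability measure μ on α, and a set 𝒞 of 'correct' hypotheses (a set of subsets of α). For n ∈ ℕ, let p(n) be the probability, over a sequence of n unlabelled examples drawn independently according to μ, that the hypothesis set T obtained by running the Label procedure on that sequence satisfies T ⊆ 𝒞 (every returned hypothesis is correct). Then p is monotone nondecreasing: for all n, p(n) ≤ p(n + 1); moreover the returned hypothesis set T is always nonempty. -/
import Mathlib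


/-- `T` covers `P` if every example in `P` is accepted by some hypothesis in `T`. -/
def Covers {α : Type*} (T : Set (Set α)) (P : Set α) : Prop :=
  ∀ p ∈ P, ∃ H ∈ T, p ∈ H

open Classical in
/-- The Label step on state `(T, P)` with unlabelled example `e`:
let `T' = {H ∈ T | e ∉ H}`; if `T'` covers `P` then the new state is `(T', P)`
(`e` labelled negative); otherwise the new state is `(T, insert e P)`
(`e` labelled positive). -/
noncomputable def LabelStep {α : Type*} (s : Set (Set α) × Set α) (e : α) :
    Set (Set α) × Set α :=
  if Covers {H ∈ s.1 | e ∉ H} s.2 then ({H ∈ s.1 | e ∉ H}, s.2)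
  else (s.1, insert e s.2)

/-- The Label procedure: left fold of the Label step over a list of examples. -/
noncomputable def LabelRun {α : Type*} (s : Set (Set α) × Set α) (l : List α) :
    Set (Set α) × Set α :=
  l.foldl LabelStep s

lemma labelStep_fst_subset {α : Type*} (s : Set (Set α) × Set α) (e : α) :
    (LabelStep s e).1 ⊆ s.1 := by
  unfold LabelStep
  split_ifs
  · exact Set.sep_subset _ _
  · exact subset_rfl

lemma labelStep_invariant {α : Type*} (s : Set (Set α) × Set α) (e : α)
    (h : Covers s.1 s.2) :
    Covers (LabelStep s e).1 (LabelStep s e).2 ∧ (LabelStep s e).2.Nonempty ∨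
      ¬ s.2.Nonempty := by
  by_cases hne : s.2.Nonempty
  · left
    unfold LabelStep
    split_ifs with hc
    · exact ⟨hc, hne⟩
    · constructor
      · intro q hq
        rcases hq with rfl | hq
        · by_contra he
          push_neg at he
          apply hc
          intro r hr
          obtain ⟨H, hH, hrH⟩ := h r hr
          exact ⟨H, ⟨hH, he H hH⟩, hrH⟩
        · exact h q hq
      · exact ⟨e, Set.mem_insert _ _⟩
  · right; exact hne

lemma labelRun_invariant {α : Type*} (l : List α) (s : Set (Set α) × Set α)
    (h : Covers s.1 s.2) (hne : s.2.Nonempty) :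
    Covers (LabelRun s l).1 (LabelRun s l).2 ∧ (LabelRun s l).2.Nonempty := by
  induction l generalizing s with
  | nil => exact ⟨h, hne⟩
  | cons e l ih =>
    rcases labelStep_invariant s e h with ⟨h1, h2⟩ | h'
    · exact ih _ h1 h2
    · exact absurd hne h'

lemma labelRun_fst_subset {α : Type*} (l : List α) (s : Set (Set α) × Set α) :
    (LabelRun s l).1 ⊆ s.1 := by
  induction l generalizing s with
  | nil => exact subset_rfl
  | cons e l ih => exact (ih _).trans (labelStep_fst_subset s e)

open MeasureTheory in
/-- Hypothesis Correctness: the probability that the Label procedure returns a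
correct hypothesis set (one contained in the set `𝒞` of correct hypotheses),
over `n` unlabelled examples drawn i.i.d. from `μ`, is monotone nondecreasing
in `n`; moreover the returned hypothesis set is always nonempty. -/
theorem stmt_8 {α : Type*} [Fintype α] [Nonempty α]
    [MeasurableSpace α] [MeasurableSingletonClass α]
    (T₀ : Set (Set α)) (P₀ : Set α) (hTP : Covers T₀ P₀) (hP₀ : P₀.Nonempty)
    (μ : Measure α) [IsProbabilityMeasure μ]
    (𝒞 : Set (Set α))
    (p : ℕ → ENNReal)
    (hp : ∀ n, p n = (Measure.pi fun _ : Fin n => μ)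
      {x : Fin n → α | (LabelRun (T₀, P₀) (List.ofFn x)).1 ⊆ 𝒞}) :
    (∀ n, p n ≤ p (n + 1)) ∧
      ∀ l : List α, (LabelRun (T₀, P₀) l).1.Nonempty := by
  constructor
  · intro n
    rw [hp n, hp (n + 1)]
    set S : Set (Fin n → α) := {x | (LabelRun (T₀, P₀) (List.ofFn x)).1 ⊆ 𝒞} with hS
    have hmp := measurePreserving_piFinSuccAbove (fun _ : Fin (n + 1) => μ) (Fin.last n)
    have hSm : MeasurableSet ((Set.univ : Set α) ×ˢ S) := (Set.toFinite _).measurableSet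
    have key : (Measure.pi fun _ : Fin (n + 1) => μ)
        ((MeasurableEquiv.piFinSuccAbove (fun _ => α) (Fin.last n)) ⁻¹'
          ((Set.univ : Set α) ×ˢ S)) = (Measure.pi fun _ : Fin n => μ) S := by
      rw [hmp.measure_preimage hSm.nullMeasurableSet, Measure.prod_prod, measure_univ, one_mul]
    rw [← key]
    apply measure_mono
    intro x hx
    simp only [Set.mem_preimage, MeasurableEquiv.piFinSuccAbove_apply, Set.mem_prod,
      Set.mem_univ, true_and] at hx
    have hofn : List.ofFn x =
        (List.ofFn fun i : Fin n => x ((Fin.last n).succAbove i)) ++ [x (Fin.last n)] := by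
      rw [List.ofFn_succ']
      simp [Fin.succAbove_last, List.concat_eq_append]
    simp only [Set.mem_setOf_eq, hofn, LabelRun, List.foldl_append, List.foldl_cons,
      List.foldl_nil]
    exact (labelStep_fst_subset _ _).trans hx
  · intro l
    obtain ⟨hcov, hne⟩ := labelRun_invariant l (T₀, P₀) hTP hP₀
    obtain ⟨q, hq⟩ := hne
    obtain ⟨H, hH, _⟩ := hcov q hq
    exact ⟨H, hH⟩
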